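/- Let ψ be a stable matching rule (ψ(P',C') is stable under (P',C') for every profile). If (P', C') is a Nash equilibrium of the game (ψ, P, C), then the matching ψ(P', C') is individually rational under the true profile (P, C). -/

import Mathlib

/-! Common set-up for a many-to-one matching market.  `W` is the (finite) set of
workers and `F` the set of firms.  Each worker `w` has a strict preference over
`F ∪ {∅}`, modelled as a linear order `P w : LinearOrder (Option F)` (where
`none` stands for being unmatched and `L.lt a b` means `b` is strictly
preferred to `a`).  Each firm `f` has a choice function
`C f : Finset W → Finset W`. -/

/-- A many-to-one matching. -/
structure Matching (W F : Type*) where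
  /-- the firm (if any) assigned to each worker -/
  workerOf : W → Option F
  /-- the set of workers assigned to each firm -/
  firmOf : F → Finset W
  /-- `w` works for `f` iff `f` is `w`'s firm -/
  consistent : ∀ w f, w ∈ firmOf f ↔ workerOf w = some f

variable {W F : Type*} [DecidableEq W]

/-- A choice function: `Cf S ⊆ S`, and substitutability. -/
def SubChoice (Cf : Finset W → Finset W) : Prop :=
  (∀ S, Cf S ⊆ S) ∧ ∀ S' S : Finset W, S' ⊆ S → Cf S ∩ S' ⊆ Cf S'

/-- Consistency of a choice function. -/
def ConsistentChoice (Cf : Finset W → Finset W) : Prop :=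
  ∀ S' S : Finset W, Cf S ⊆ S' → S' ⊆ S → Cf S' = Cf S

/-- The law of aggregate demand. -/
def LAD (Cf : Finset W → Finset W) : Prop :=
  ∀ S' S : Finset W, S' ⊆ S → (Cf S').card ≤ (Cf S).card

/-- Individual rationality: no worker prefers being unmatched to her assignment,
and no firm wants to fire any of its workers. -/
def IndRational (P : W → LinearOrder (Option F)) (C : F → Finset W → Finset W)
    (μ : Matching W F) : Prop :=
  (∀ w : W, ¬ (P w).lt (μ.workerOf w) none) ∧
    ∀ f : F, C f (μ.firmOf f) = μ.firmOf f

/-- Stability: individual rationality plus absence of blocking firm-worker pairs. -/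
def Stable (P : W → LinearOrder (Option F)) (C : F → Finset W → Finset W)
    (μ : Matching W F) : Prop :=
  IndRational P C μ ∧
    ¬ ∃ (f : F) (w : W), w ∉ μ.firmOf f ∧ w ∈ C f (insert w (μ.firmOf f)) ∧
      (P w).lt (μ.workerOf w) (some f)

variable [DecidableEq F]

/-- A Nash equilibrium of the game `(ψ, P, C)` in which both workers and firms
play strategically: no worker can obtain a strictly `P_w`-better firm by a
unilateral misreport and no firm can obtain a Blair-`⪰_f`-better (w.r.t. its
true choice function `C_f`) set of workers by unilaterally misreporting a
substitutable choice function. -/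
def NashEq (P : W → LinearOrder (Option F)) (C : F → Finset W → Finset W)
    (ψ : (W → LinearOrder (Option F)) → (F → Finset W → Finset W) → Matching W F)
    (P' : W → LinearOrder (Option F)) (C' : F → Finset W → Finset W) : Prop :=
  (∀ (w : W) (Pw : LinearOrder (Option F)),
      ¬ (P w).lt ((ψ P' C').workerOf w)
        ((ψ (Function.update P' w Pw) C').workerOf w)) ∧
    ∀ (f : F) (Cf : Finset W → Finset W), SubChoice Cf →
      (ψ P' C').firmOf f =
        C f ((ψ P' C').firmOf f ∪ (ψ P' (Function.update C' f Cf)).firmOf f)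

/-- Auxiliary: a linear order on `Option F` with `none` strictly on top. -/
noncomputable def noneTop {F : Type*} (L : LinearOrder (Option F)) : LinearOrder (Option F) :=
  letI LB : LinearOrder (Lex (Bool × Option F)) := @Prod.Lex.instLinearOrder Bool (Option F) _ L
  LinearOrder.lift' (β := Lex (Bool × Option F)) (fun a => toLex (a.isNone, a))
    (fun _ _ h => (Prod.mk.injEq _ _ _ _ ▸ congrArg ofLex h).2)

theorem noneTop_lt {F : Type*} (L : LinearOrder (Option F)) (a : Option F) (ha : a ≠ none) :
    (noneTop L).lt a none := by
  show (@Prod.Lex.instLinearOrder Bool (Option F) _ L).lt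
    (toLex (a.isNone, a)) (toLex ((none : Option F).isNone, (none : Option F)))
  have : Prod.Lex (· < ·) L.lt (a.isNone, a) ((none : Option F).isNone, none) :=
    Prod.Lex.left _ _ (by cases a <;> simp_all)
  exact this

/-- If `ψ` is a stable rule and `(P', C')` is a Nash
equilibrium of the game `(ψ, P, C)`, then `ψ(P', C')` is individually rational
under the true profile `(P, C)`. -/
theorem nashEq_indRational
    (P : W → LinearOrder (Option F)) (C : F → Finset W → Finset W)
    (hC : ∀ f, SubChoice (C f))
    (ψ : (W → LinearOrder (Option F)) → (F → Finset W → Finset W) → Matching W F)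
    (hψ : ∀ P' C', (∀ f, SubChoice (C' f)) → Stable P' C' (ψ P' C'))
    (P' : W → LinearOrder (Option F)) (C' : F → Finset W → Finset W)
    (hC' : ∀ f, SubChoice (C' f))
    (hNE : NashEq P C ψ P' C') :
    IndRational P C (ψ P' C') := by
  constructor
  · intro w hlt
    have hstable := hψ (Function.update P' w (noneTop (P' w))) C' hC'
    have hIR := hstable.1.1 w
    rw [Function.update_self] at hIR
    have hnone : (ψ (Function.update P' w (noneTop (P' w))) C').workerOf w = none := by
      by_contra hne
      exact hIR (noneTop_lt _ _ hne)
    have := hNE.1 w (noneTop (P' w))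
    rw [hnone] at this
    exact this hlt
  · intro f
    have h := hNE.2 f (C' f) (hC' f)
    rw [Function.update_eq_self, Finset.union_self] at h
    exact h.symm
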